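/- Let the data matrices X_0, X, U be generated by the system and satisfy the persistency of excitation assumption rank([X_0; U]) = mT + n. Let K ∈ ℝ^{m×n}, λ ∈ ℝ, and v ∈ ℝ^n with v ≠ 0 and (A − B K)v = λ v. Then there exist vectors α and β such that: (i) X_0 K_U α = v; (ii) X K_U α + X K_0 β = W Λ_λ X_0 K_U α; and (iii) (I_T ⊗ K) Z Λ_λ X_0 K_U α + U K_0 β = 0, i.e., [α; β] lies in Ker([X K_U − W Λ_λ X_0 K_U, X K_0]) ∩ Ker([(I_T ⊗ K) Z Λ_λ X_0 K_U, U K_0]). -/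
import Mathlib


open Matrix

/-- The full state sequence over times `0, 1, …, T` built from the initial state `x0` and the
subsequent states `x 0 = x(1), …, x (T-1) = x(T)`. -/
def stateSeq {n T : ℕ} (x0 : Fin n → ℝ) (x : Fin T → Fin n → ℝ) : Fin (T + 1) → Fin n → ℝ :=
  Fin.cases x0 x

/-- `(x0, u, x)` is a trajectory of the system `x(t+1) = A x(t) + B u(t)`. -/
def IsTrajectory {n m T : ℕ} (A : Matrix (Fin n) (Fin n) ℝ) (B : Matrix (Fin n) (Fin m) ℝ)
    (x0 : Fin n → ℝ) (u : Fin T → Fin m → ℝ) (x : Fin T → Fin n → ℝ) : Prop :=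
  ∀ t : Fin T, x t = A.mulVec (stateSeq x0 x t.castSucc) + B.mulVec (u t)

/-- The data matrices are generated by `N` experiments of length `T` on the system. -/
def DataGenerated {n m T N : ℕ} (A : Matrix (Fin n) (Fin n) ℝ) (B : Matrix (Fin n) (Fin m) ℝ)
    (X0 : Matrix (Fin n) (Fin N) ℝ) (X : Matrix (Fin T × Fin n) (Fin N) ℝ)
    (U : Matrix (Fin T × Fin m) (Fin N) ℝ) : Prop :=
  ∀ i : Fin N, IsTrajectory A B (fun j => X0 j i) (fun t j => U (t, j) i) (fun t j => X (t, j) i)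

/-- The columns of `Kb` form a basis of `Ker M`. -/
def IsKerBasis {α β γ : Type*} [Fintype β] [Fintype γ]
    (M : Matrix α β ℝ) (Kb : Matrix β γ ℝ) : Prop :=
  Function.Injective Kb.mulVecLin ∧ LinearMap.range Kb.mulVecLin = LinearMap.ker M.mulVecLin

/-- `Λ_λ = [I; λI; λ²I; …; λ^T I] ∈ ℝ^{n(T+1) × n}`. -/
def LamMat (T n : ℕ) (lam : ℝ) : Matrix (Fin (T + 1) × Fin n) (Fin n) ℝ :=
  Matrix.of fun p q => lam ^ (p.1 : ℕ) * (if p.2 = q then 1 else 0)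

/-- `W = [0_{nT×n}  I_{nT}]`, the matrix extracting the last `nT` rows of `Λ_λ`. -/
def Wmat (T n : ℕ) : Matrix (Fin T × Fin n) (Fin (T + 1) × Fin n) ℝ :=
  Matrix.of fun p q => if q.1 = p.1.succ ∧ q.2 = p.2 then 1 else 0

/-- `Z = [I_{nT}  0_{nT×n}]`, the matrix extracting the first `nT` rows of `Λ_λ`. -/
def Zmat (T n : ℕ) : Matrix (Fin T × Fin n) (Fin (T + 1) × Fin n) ℝ :=
  Matrix.of fun p q => if q.1 = p.1.castSucc ∧ q.2 = p.2 then 1 else 0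


open Kronecker

section AuxLemmas

lemma stateSeq_zero {n T : ℕ} (x0 : Fin n → ℝ) (x : Fin T → Fin n → ℝ) :
    stateSeq x0 x 0 = x0 := rfl

lemma stateSeq_succ {n T : ℕ} (x0 : Fin n → ℝ) (x : Fin T → Fin n → ℝ) (t : Fin T) :
    stateSeq x0 x t.succ = x t := by simp [stateSeq]

lemma traj_unique {n m T : ℕ} {A : Matrix (Fin n) (Fin n) ℝ} {B : Matrix (Fin n) (Fin m) ℝ}
    {x0 : Fin n → ℝ} {u : Fin T → Fin m → ℝ} {x x' : Fin T → Fin n → ℝ}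
    (h1 : IsTrajectory A B x0 u x) (h2 : IsTrajectory A B x0 u x') : x = x' := by
  have key : ∀ k, ∀ t : Fin T, (t : ℕ) = k → x t = x' t := by
    intro k
    induction k using Nat.strong_induction_on with
    | _ k ih =>
      intro t ht
      rw [h1 t, h2 t]
      have hstate : stateSeq x0 x t.castSucc = stateSeq x0 x' t.castSucc := by
        rcases Nat.eq_zero_or_pos k with hk | hk
        · have h0 : t.castSucc = 0 := by
            ext; simpa [Fin.coe_castSucc] using ht.trans hk
          rw [h0, stateSeq_zero, stateSeq_zero]
        · obtain ⟨j, hj⟩ := Nat.exists_eq_succ_of_ne_zero (Nat.pos_iff_ne_zero.mp hk)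
          have hjT : j < T := by omega
          have hcs : t.castSucc = Fin.succ ⟨j, hjT⟩ := by
            ext; simp [Fin.coe_castSucc, ht, hj]
          rw [hcs, stateSeq_succ, stateSeq_succ, ih j (by omega) ⟨j, hjT⟩ rfl]
      rw [hstate]
  funext t
  exact key t t rfl

lemma traj_mulVec {n m T N : ℕ} {A : Matrix (Fin n) (Fin n) ℝ} {B : Matrix (Fin n) (Fin m) ℝ}
    {X0 : Matrix (Fin n) (Fin N) ℝ} {X : Matrix (Fin T × Fin n) (Fin N) ℝ}
    {U : Matrix (Fin T × Fin m) (Fin N) ℝ} (hdata : DataGenerated A B X0 X U) (g : Fin N → ℝ) :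
    IsTrajectory A B (X0.mulVec g) (fun t j => U.mulVec g (t, j))
      (fun t j => X.mulVec g (t, j)) := by
  intro t
  have hstate : ∀ s : Fin (T + 1),
      stateSeq (X0.mulVec g) (fun t j => X.mulVec g (t, j)) s
        = fun j => ∑ i, stateSeq (fun j => X0 j i) (fun t j => X (t, j) i) s j * g i := by
    intro s
    induction s using Fin.cases with
    | zero => funext j; simp [stateSeq, mulVec, dotProduct]
    | succ t => funext j; simp [stateSeq, mulVec, dotProduct]
  funext j
  have hcol := fun i => congrFun ((hdata i) t) j
  simp only [Pi.add_apply] at hcol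
  show X.mulVec g (t, j) = _
  rw [hstate]
  simp only [mulVec, dotProduct, Pi.add_apply]
  calc ∑ i, X (t, j) i * g i
      = ∑ i, ((∑ k, A j k * stateSeq (fun j => X0 j i) (fun t j => X (t, j) i) t.castSucc k)
          + ∑ k, B j k * U (t, k) i) * g i := by
        refine Finset.sum_congr rfl fun i _ => ?_
        rw [hcol i]; rfl
    _ = _ := by
        simp only [add_mul, Finset.sum_add_distrib, Finset.sum_mul, Finset.mul_sum]
        rw [Finset.sum_comm, Finset.sum_comm (s := Finset.univ) (t := Finset.univ)
          (f := fun i k => B j k * U (t, k) i * g i)]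
        congr 1 <;> exact Finset.sum_congr rfl fun k _ => Finset.sum_congr rfl fun i _ => by ring

lemma traj_closed {n m T : ℕ} {A : Matrix (Fin n) (Fin n) ℝ} {B : Matrix (Fin n) (Fin m) ℝ}
    {K : Matrix (Fin m) (Fin n) ℝ} {lam : ℝ} {v : Fin n → ℝ}
    (heig : (A - B * K).mulVec v = lam • v) :
    IsTrajectory A B v (fun t : Fin T => (-(lam ^ (t : ℕ))) • K.mulVec v)
      (fun t : Fin T => lam ^ ((t : ℕ) + 1) • v) := by
  intro t
  have hs : stateSeq v (fun t : Fin T => lam ^ ((t : ℕ) + 1) • v) t.castSucc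
      = lam ^ (t : ℕ) • v := by
    rcases t with ⟨tv, htv⟩
    cases tv with
    | zero => rw [show ((⟨0, htv⟩ : Fin T).castSucc) = 0 from rfl, stateSeq_zero]; simp
    | succ j =>
        have : (⟨j + 1, htv⟩ : Fin T).castSucc = Fin.succ ⟨j, by omega⟩ := rfl
        rw [this, stateSeq_succ]
  rw [hs]
  have h2 := congrArg (fun w => lam ^ (t : ℕ) • w) heig
  simp only [sub_mulVec, ← mulVec_mulVec, smul_sub, smul_smul] at h2 ⊢
  rw [mulVec_smul, mulVec_smul]
  rw [pow_succ, ← h2]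
  simp [neg_smul]
  abel

lemma WLam_mulVec {T n : ℕ} (lam : ℝ) (v : Fin n → ℝ) (pp : Fin T × Fin n) :
    (Wmat T n * LamMat T n lam).mulVec v pp = lam ^ ((pp.1 : ℕ) + 1) * v pp.2 := by
  obtain ⟨t, j⟩ := pp
  simp only [mulVec, dotProduct, Matrix.mul_apply, Wmat, LamMat, Matrix.of_apply,
    Fintype.sum_prod_type, ite_and, ite_mul, mul_ite, one_mul, zero_mul, mul_zero, mul_one,
    Finset.sum_ite_eq, Finset.sum_ite_eq', Finset.mem_univ, if_true]
  simp [Finset.sum_ite_eq, Finset.mul_sum]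

lemma ZLam_apply {T n : ℕ} (lam : ℝ) (pp : Fin T × Fin n) (k : Fin n) :
    (Zmat T n * LamMat T n lam) pp k = lam ^ (pp.1 : ℕ) * (if pp.2 = k then 1 else 0) := by
  obtain ⟨t, j⟩ := pp
  simp only [Matrix.mul_apply, Zmat, LamMat, Matrix.of_apply, Fintype.sum_prod_type, ite_and,
    ite_mul, one_mul, zero_mul, Finset.sum_ite_eq, Finset.sum_ite_eq', Finset.mem_univ, if_true]
  simp

lemma KZLam_apply {T n m : ℕ} (K : Matrix (Fin m) (Fin n) ℝ) (lam : ℝ)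
    (pp : Fin T × Fin m) (k : Fin n) :
    ((1 : Matrix (Fin T) (Fin T) ℝ) ⊗ₖ K * Zmat T n * LamMat T n lam) pp k
      = lam ^ (pp.1 : ℕ) * K pp.2 k := by
  obtain ⟨t, i⟩ := pp
  rw [Matrix.mul_assoc, Matrix.mul_apply]
  simp only [Fintype.sum_prod_type, ZLam_apply, kroneckerMap_apply, Matrix.one_apply, ite_mul,
    one_mul, zero_mul, mul_ite, mul_zero, mul_one, Finset.sum_ite_eq, Finset.sum_ite_eq',
    Finset.mem_univ, if_true]
  try simp
  ring

lemma KZLam_mulVec {T n m : ℕ} (K : Matrix (Fin m) (Fin n) ℝ) (lam : ℝ) (v : Fin n → ℝ)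
    (pp : Fin T × Fin m) :
    ((1 : Matrix (Fin T) (Fin T) ℝ) ⊗ₖ K * Zmat T n * LamMat T n lam).mulVec v pp
      = lam ^ ((pp.1 : ℕ)) * K.mulVec v pp.2 := by
  simp only [mulVec, dotProduct, KZLam_apply, Finset.mul_sum]
  exact Finset.sum_congr rfl fun k _ => by ring

end AuxLemmas

/-- Under persistency of excitation, if `v ≠ 0` is an eigenvector of `A − B K`
with eigenvalue `λ`, then there exist `α, β` with `X₀ K_U α = v`,
`X K_U α + X K₀ β = W Λ_λ X₀ K_U α`, and `(I_T ⊗ K) Z Λ_λ X₀ K_U α + U K₀ β = 0`. -/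
theorem stmt7 {n m T N p q : ℕ}
    (A : Matrix (Fin n) (Fin n) ℝ) (B : Matrix (Fin n) (Fin m) ℝ)
    (X0 : Matrix (Fin n) (Fin N) ℝ) (X : Matrix (Fin T × Fin n) (Fin N) ℝ)
    (U : Matrix (Fin T × Fin m) (Fin N) ℝ)
    (hdata : DataGenerated A B X0 X U)
    (KU : Matrix (Fin N) (Fin p) ℝ) (K0 : Matrix (Fin N) (Fin q) ℝ)
    (hKU : IsKerBasis U KU) (hK0 : IsKerBasis X0 K0)
    (hPE : (Matrix.fromRows X0 U).rank = m * T + n)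
    (K : Matrix (Fin m) (Fin n) ℝ) (lam : ℝ) (v : Fin n → ℝ)
    (hv : v ≠ 0) (heig : (A - B * K).mulVec v = lam • v) :
    ∃ (α : Fin p → ℝ) (β : Fin q → ℝ),
      X0.mulVec (KU.mulVec α) = v ∧
      X.mulVec (KU.mulVec α) + X.mulVec (K0.mulVec β) =
        (Wmat T n * LamMat T n lam).mulVec (X0.mulVec (KU.mulVec α)) ∧
      ((1 : Matrix (Fin T) (Fin T) ℝ) ⊗ₖ K * Zmat T n * LamMat T n lam).mulVec
          (X0.mulVec (KU.mulVec α)) + U.mulVec (K0.mulVec β) = 0 := by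
  classical
  -- the closed-loop input sequence, stacked
  set u : Fin T × Fin m → ℝ := fun tm => -(lam ^ (tm.1 : ℕ)) * K.mulVec v tm.2 with hu
  set F := Matrix.fromRows X0 U with hF
  -- surjectivity of [X0; U]
  have hrange : LinearMap.range F.mulVecLin = ⊤ := by
    apply Submodule.eq_top_of_finrank_eq
    have h1 : Module.finrank ℝ ↥(LinearMap.range F.mulVecLin) = m * T + n := hPE
    rw [h1, Module.finrank_pi, Fintype.card_sum, Fintype.card_prod, Fintype.card_fin,
      Fintype.card_fin, Fintype.card_fin]
    ring
  obtain ⟨g, hg⟩ : ∃ g, F.mulVecLin g = Sum.elim v u := by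
    have : Sum.elim v u ∈ LinearMap.range F.mulVecLin := by rw [hrange]; trivial
    exact this
  rw [mulVecLin_apply, hF, fromRows_mulVec] at hg
  have hX0g : X0.mulVec g = v := funext fun j => congrFun hg (Sum.inl j)
  have hUg : U.mulVec g = u := funext fun j => congrFun hg (Sum.inr j)
  -- kernel decomposition
  have hkerF : LinearMap.ker F.mulVecLin
      = LinearMap.ker U.mulVecLin ⊓ LinearMap.ker X0.mulVecLin := by
    ext x
    simp only [LinearMap.mem_ker, Submodule.mem_inf, mulVecLin_apply, hF, fromRows_mulVec]
    constructor
    · intro h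
      exact ⟨funext fun i => congrFun h (Sum.inr i), funext fun i => congrFun h (Sum.inl i)⟩
    · rintro ⟨h1, h2⟩
      funext i
      cases i with
      | inl j => exact congrFun h2 j
      | inr j => exact congrFun h1 j
  have hsup : LinearMap.ker U.mulVecLin ⊔ LinearMap.ker X0.mulVecLin = ⊤ := by
    apply Submodule.eq_top_of_finrank_eq
    have e1 := LinearMap.finrank_range_add_finrank_ker F.mulVecLin
    have e2 := LinearMap.finrank_range_add_finrank_ker U.mulVecLin
    have e3 := LinearMap.finrank_range_add_finrank_ker X0.mulVecLin
    have e4 := Submodule.finrank_sup_add_finrank_inf_eq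
      (LinearMap.ker U.mulVecLin) (LinearMap.ker X0.mulVecLin)
    have hrF : Module.finrank ℝ ↥(LinearMap.range F.mulVecLin) = m * T + n := hPE
    have hrU : Module.finrank ℝ ↥(LinearMap.range U.mulVecLin) ≤ m * T := by
      have := Matrix.rank_le_card_height U
      simpa [Matrix.rank, mul_comm] using this
    have hrX0 : Module.finrank ℝ ↥(LinearMap.range X0.mulVecLin) ≤ n := by
      have := Matrix.rank_le_card_height X0
      simpa [Matrix.rank] using this
    have hle := Submodule.finrank_le (LinearMap.ker U.mulVecLin ⊔ LinearMap.ker X0.mulVecLin)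
    rw [hkerF] at e1
    simp only [Module.finrank_pi, Fintype.card_fin] at e1 e2 e3 hle ⊢
    omega
  obtain ⟨y, hy, z, hz, hyz⟩ := Submodule.mem_sup.mp (hsup ▸ Submodule.mem_top (x := g))
  obtain ⟨α, hα⟩ : ∃ α, KU.mulVec α = y := by
    have : y ∈ LinearMap.range KU.mulVecLin := hKU.2 ▸ hy
    obtain ⟨α, hα⟩ := this
    exact ⟨α, hα⟩
  obtain ⟨β, hβ⟩ : ∃ β, K0.mulVec β = z := by
    have : z ∈ LinearMap.range K0.mulVecLin := hK0.2 ▸ hz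
    obtain ⟨β, hβ⟩ := this
    exact ⟨β, hβ⟩
  have hUy : U.mulVec y = 0 := hy
  have hX0z : X0.mulVec z = 0 := hz
  have hcond1 : X0.mulVec (KU.mulVec α) = v := by
    rw [hα]
    have : X0.mulVec y + X0.mulVec z = v := by
      rw [← Matrix.mulVec_add, hyz, hX0g]
    rw [hX0z, add_zero] at this
    exact this
  have hUz : U.mulVec z = u := by
    rw [← hyz, Matrix.mulVec_add, hUy, zero_add] at hUg
    exact hUg
  -- the trajectory generated by g coincides with the closed-loop one
  have htraj := traj_mulVec hdata g
  rw [hX0g] at htraj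
  have hueq : (fun t j => U.mulVec g (t, j))
      = fun t : Fin T => (-(lam ^ (t : ℕ))) • K.mulVec v := by
    funext t j
    rw [hUg]
    simp [hu]
  rw [hueq] at htraj
  have hX : (fun t j => X.mulVec g (t, j)) = fun t : Fin T => lam ^ ((t : ℕ) + 1) • v :=
    traj_unique htraj (traj_closed heig)
  refine ⟨α, β, hcond1, ?_, ?_⟩
  · rw [hcond1, hα, hβ]
    funext pp
    rw [Pi.add_apply, WLam_mulVec]
    have h1 : X.mulVec y pp + X.mulVec z pp = X.mulVec g pp := by
      rw [← Pi.add_apply, ← Matrix.mulVec_add, hyz]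
    have h2 : X.mulVec g (pp.1, pp.2) = (lam ^ ((pp.1 : ℕ) + 1) • v) pp.2 :=
      congrFun (congrFun hX pp.1) pp.2
    rw [h1]
    simpa using h2
  · rw [hcond1, hβ, hUz]
    funext pp
    rw [Pi.add_apply, KZLam_mulVec]
    simp [hu]
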